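/- Let (W,S) be a Coxeter system and let w ∈ W be straight. Then w is of minimal length in its conjugacy class. Moreover, if w normalises W_I for some spherical subset I ⊆ S, then ℓ(ws) > ℓ(w) for all s ∈ I (that is, w belongs to N_I, the set of minimal length coset representatives in N_W(W_I)). -/

import Mathlib

open CoxeterSystem

variable {B W : Type*} [Group W] {M : CoxeterMatrix B}

/-- `w →ˢ w'`: one elementary conjugation by a simple reflection, not increasing length. -/
def ConjStep (cs : CoxeterSystem M W) (w w' : W) : Prop :=
  ∃ i : B, w' = cs.simple i * w * cs.simple i ∧ cs.length w' ≤ cs.length w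

/-- `w → w'`: a finite chain of elementary conjugations. -/
def ConjMove (cs : CoxeterSystem M W) : W → W → Prop :=
  Relation.ReflTransGen (ConjStep cs)

/-- `u` has minimal length in its conjugacy class. -/
def IsMinimalLength (cs : CoxeterSystem M W) (u : W) : Prop :=
  ∀ v : W, cs.length u ≤ cs.length (v⁻¹ * u * v)

/-- The standard parabolic subgroup `W_I`. -/
def StandardParabolic (cs : CoxeterSystem M W) (I : Set B) : Subgroup W :=
  Subgroup.closure (cs.simple '' I)

/-- `I` is spherical if `W_I` is finite. -/
def IsSpherical (cs : CoxeterSystem M W) (I : Set B) : Prop :=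
  (StandardParabolic cs I : Set W).Finite

/-- `w ≈ˣ w'`: elementarily strongly conjugate via `x`. -/
def ElemStrong (cs : CoxeterSystem M W) (x w w' : W) : Prop :=
  cs.length w = cs.length w' ∧ w' = x⁻¹ * w * x ∧
    (cs.length (x⁻¹ * w) = cs.length x + cs.length w ∨
     cs.length (w * x) = cs.length w + cs.length x)

/-- `w ∼ w'`: strongly conjugate. -/
def StrongConj (cs : CoxeterSystem M W) : W → W → Prop :=
  Relation.ReflTransGen (fun w w' => ∃ x : W, ElemStrong cs x w w')

/-- `w` and `w'` are elementarily tightly conjugate. -/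
def ElemTight (cs : CoxeterSystem M W) (w w' : W) : Prop :=
  cs.length w = cs.length w' ∧
    ((∃ i : B, w' = cs.simple i * w * cs.simple i) ∨
     (∃ I : Set B, IsSpherical cs I ∧ w ∈ Subgroup.normalizer (StandardParabolic cs I : Set W) ∧
       ∃ x ∈ StandardParabolic cs I, ElemStrong cs x w w'))

/-- `w ≈_t w'`: tightly conjugate. -/
def TightConj (cs : CoxeterSystem M W) : W → W → Prop :=
  Relation.ReflTransGen (ElemTight cs)

/-- `w` is elementarily related to `w'`: `w'` is a cyclic shift `s_k ⋯ s_d s_1 ⋯ s_{k-1}`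
(`k ∈ {1, …, d}`) of some reduced decomposition `w = s_1 ⋯ s_d` of `w`. -/
def ElemRelated (cs : CoxeterSystem M W) (w w' : W) : Prop :=
  ∃ ω : List B, cs.wordProd ω = w ∧ cs.IsReduced ω ∧
    ∃ k, 1 ≤ k ∧ k ≤ ω.length ∧ w' = cs.wordProd (ω.drop (k - 1) ++ ω.take (k - 1))

/-- `w ∼_κ w'`: related by a finite chain of cyclic shifts. -/
def KappaConj (cs : CoxeterSystem M W) : W → W → Prop :=
  Relation.ReflTransGen (ElemRelated cs)

/-- `w'` is a cyclic shift `s_{r+1} ⋯ s_d s_1 ⋯ s_r` (`r ∈ {1, …, d}`) of some reduced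
decomposition `w = s_1 ⋯ s_d` of `w`. -/
def CyclicShift (cs : CoxeterSystem M W) (w w' : W) : Prop :=
  ∃ ω : List B, cs.wordProd ω = w ∧ cs.IsReduced ω ∧
    ∃ r, 1 ≤ r ∧ r ≤ ω.length ∧ w' = cs.wordProd (ω.drop r ++ ω.take r)

/-- `w` is straight if `ℓ(wⁿ) = n ℓ(w)` for all `n : ℕ`. -/
def IsStraight (cs : CoxeterSystem M W) (w : W) : Prop :=
  ∀ n : ℕ, cs.length (w ^ n) = n * cs.length w

private lemma conjpow (v w : W) (n : ℕ) : (v⁻¹ * w * v) ^ n = v⁻¹ * w ^ n * v := by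
  induction n with
  | zero => simp
  | succ n ih => rw [pow_succ, pow_succ, ih]; group

private lemma length_pow_le (cs : CoxeterSystem M W) (w : W) (n : ℕ) :
    cs.length (w ^ n) ≤ n * cs.length w := by
  induction n with
  | zero => simp
  | succ n ih =>
      rw [pow_succ]
      calc cs.length (w ^ n * w) ≤ cs.length (w ^ n) + cs.length w := cs.length_mul_le _ _
        _ ≤ n * cs.length w + cs.length w := by omega
        _ = (n + 1) * cs.length w := by ring

/-- A straight element has minimal length in its conjugacy class; moreover, if it normalises
a finite standard parabolic `W_I`, then it is the minimal length representative of its coset,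
i.e. `ℓ(ws) > ℓ(w)` for all `s ∈ I`. -/
theorem straight_min_length_and_mem_NI (cs : CoxeterSystem M W) (w : W)
    (hw : IsStraight cs w) :
    IsMinimalLength cs w ∧
      ∀ I : Set B, IsSpherical cs I → w ∈ Subgroup.normalizer (StandardParabolic cs I : Set W) →
        ∀ i ∈ I, cs.length w < cs.length (w * cs.simple i) := by
  constructor
  · -- minimal length in conjugacy class
    intro v
    by_contra h
    push_neg at h
    set u := v⁻¹ * w * v with hu
    set n := 2 * cs.length v + 1 with hn
    have hwn : w ^ n = v * u ^ n * v⁻¹ := by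
      rw [hu, conjpow]; group
    have h1 : cs.length (w ^ n) ≤ cs.length v + (cs.length (u ^ n) + cs.length v) := by
      rw [hwn]
      calc cs.length (v * u ^ n * v⁻¹)
          ≤ cs.length (v * u ^ n) + cs.length v⁻¹ := cs.length_mul_le _ _
        _ ≤ cs.length v + cs.length (u ^ n) + cs.length v⁻¹ := by
            have := cs.length_mul_le v (u ^ n); omega
        _ = cs.length v + (cs.length (u ^ n) + cs.length v) := by
            rw [cs.length_inv]; ring
    have h2 : cs.length (u ^ n) ≤ n * cs.length u := length_pow_le cs u n
    have h3 : n * cs.length w = cs.length (w ^ n) := (hw n).symm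
    have h4 : cs.length u + 1 ≤ cs.length w := h
    nlinarith [h1, h2, h3, h4]
  · intro I hI hnorm i hi
    by_contra h
    push_neg at h
    have hsi : cs.simple i ∈ StandardParabolic cs I :=
      Subgroup.subset_closure ⟨i, hi, rfl⟩
    -- ℓ(w * s i) + 1 = ℓ w
    have hlen : cs.length (w * cs.simple i) + 1 = cs.length w := by
      rcases cs.length_mul_simple w i with h' | h'
      · omega
      · exact h'
    set w₁ := w * cs.simple i with hw₁
    have hww : w = w₁ * cs.simple i := by
      rw [hw₁, mul_assoc, cs.simple_mul_simple_self, mul_one]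
    have hw₁norm : w₁ ∈ Subgroup.normalizer (StandardParabolic cs I : Set W) :=
      Subgroup.mul_mem _ hnorm (Subgroup.le_normalizer hsi)
    -- a bound on lengths in the finite parabolic
    obtain ⟨N, hN⟩ : ∃ N, ∀ x ∈ StandardParabolic cs I, cs.length x ≤ N := by
      obtain ⟨N, hN⟩ := (hI.image cs.length).bddAbove
      exact ⟨N, fun x hx => hN ⟨x, hx, rfl⟩⟩
    -- w ^ n = w₁ ^ n * t with t in the parabolic
    have key : ∀ n : ℕ, ∃ t ∈ StandardParabolic cs I, w ^ n = w₁ ^ n * t := by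
      intro n
      induction n with
      | zero => exact ⟨1, Subgroup.one_mem _, by simp⟩
      | succ n ih =>
          obtain ⟨t, ht, hwt⟩ := ih
          refine ⟨w₁⁻¹ * t * w₁ * cs.simple i, ?_, ?_⟩
          · refine Subgroup.mul_mem _ ?_ hsi
            have : w₁⁻¹ ∈ Subgroup.normalizer (StandardParabolic cs I : Set W) :=
              Subgroup.inv_mem _ hw₁norm
            rw [Subgroup.mem_normalizer_iff] at this
            simpa using (this t).mp ht
          · rw [pow_succ, pow_succ, hwt]
            rw [hww]; group
    -- length estimate gives contradiction for large n
    set n := N + 1 with hnn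
    obtain ⟨t, ht, hwt⟩ := key n
    have h1 : cs.length (w ^ n) ≤ cs.length (w₁ ^ n) + cs.length t := by
      rw [hwt]; exact cs.length_mul_le _ _
    have h2 : cs.length (w₁ ^ n) ≤ n * cs.length w₁ := length_pow_le cs w₁ n
    have h3 : n * cs.length w = cs.length (w ^ n) := (hw n).symm
    have h4 : cs.length t ≤ N := hN t ht
    have h5 : n * cs.length w = n * cs.length w₁ + n := by
      rw [← hlen]; ring
    omega
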